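/- In the ring ℤ[[q]], the identity Σ_{n≥0} q^{n(n+1)/2} = ∏_{m≥1} (1−q^{2m})²/(1−q^m) holds. -/

import Mathlib

noncomputable section

/-- The topology on `ℤ[[q]]` of coefficientwise convergence. -/
instance : TopologicalSpace (PowerSeries ℤ) :=
  TopologicalSpace.induced (fun f n => PowerSeries.coeff (R := ℤ) n f) inferInstance

open PowerSeries Finset

namespace JTP

abbrev R := PowerSeries ℤ

/-- convergence criterion in the coefficientwise topology -/
lemma tendsto_iff_coeff {α : Type*} {l : Filter α} {F : α → R} {a : R} :
    Filter.Tendsto F l (nhds a) ↔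
      ∀ d : ℕ, Filter.Tendsto (fun x => coeff (R := ℤ) d (F x)) l (nhds (coeff (R := ℤ) d a)) := by
  rw [nhds_induced, Filter.tendsto_comap_iff, tendsto_pi_nhds]
  rfl

lemma tendsto_of_eventually_coeff {α : Type*} {l : Filter α} {F : α → R} {a : R}
    (h : ∀ d : ℕ, ∀ᶠ x in l, coeff (R := ℤ) d (F x) = coeff (R := ℤ) d a) :
    Filter.Tendsto F l (nhds a) := by
  rw [tendsto_iff_coeff]
  intro d
  exact Filter.Tendsto.congr' (Filter.EventuallyEq.symm (h d)) tendsto_const_nhds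

instance : T2Space R := by
  have he : Topology.IsEmbedding (fun (f : R) (n : ℕ) => coeff (R := ℤ) n f) := by
    constructor
    · exact ⟨rfl⟩
    · intro f g h
      ext n
      exact congrFun h n
  exact he.t2Space

lemma hasSum_of_coeff {ι : Type*} {f : ι → R} {a : R}
    (h : ∀ d : ℕ, ∃ s₀ : Finset ι, ∀ s : Finset ι, s₀ ⊆ s →
      coeff (R := ℤ) d (∑ i ∈ s, f i) = coeff (R := ℤ) d a) : HasSum f a := by
  apply tendsto_of_eventually_coeff
  intro d
  obtain ⟨s₀, hs₀⟩ := h d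
  exact Filter.eventually_atTop.2 ⟨s₀, hs₀⟩

lemma hasProd_of_coeff {ι : Type*} {f : ι → R} {a : R}
    (h : ∀ d : ℕ, ∃ s₀ : Finset ι, ∀ s : Finset ι, s₀ ⊆ s →
      coeff (R := ℤ) d (∏ i ∈ s, f i) = coeff (R := ℤ) d a) : HasProd f a := by
  apply tendsto_of_eventually_coeff
  intro d
  obtain ⟨s₀, hs₀⟩ := h d
  exact Filter.eventually_atTop.2 ⟨s₀, hs₀⟩



/-- quotient map mod X^K -/
def pr (K : ℕ) : R →+* (R ⧸ Ideal.span {(X : R) ^ K}) := Ideal.Quotient.mk _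

lemma pr_eq_iff {K : ℕ} {a b : R} : pr K a = pr K b ↔ (X : R) ^ K ∣ a - b := by
  rw [pr, Ideal.Quotient.eq, Ideal.mem_span_singleton]

lemma coeff_eq_of_pr_eq {K d : ℕ} {a b : R} (h : pr K a = pr K b) (hd : d < K) :
    coeff (R := ℤ) d a = coeff (R := ℤ) d b := by
  rw [pr_eq_iff] at h
  have := (X_pow_dvd_iff.1 h) d hd
  simpa [sub_eq_zero] using this

lemma pr_eq_of_coeff_eq {K : ℕ} {a b : R} (h : ∀ d < K, coeff (R := ℤ) d a = coeff (R := ℤ) d b) :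
    pr K a = pr K b := by
  rw [pr_eq_iff, X_pow_dvd_iff]
  intro m hm
  simp [sub_eq_zero, h m hm]

lemma pr_X_pow {K j : ℕ} (h : K ≤ j) : pr K ((X : R) ^ j) = 0 := by
  rw [pr, Ideal.Quotient.eq_zero_iff_mem, Ideal.mem_span_singleton]
  exact pow_dvd_pow _ h

lemma pr_one_sub_X_pow {K j : ℕ} (h : K ≤ j) : pr K (1 - (X : R) ^ j) = 1 := by
  have : pr K (1 - (X:R)^j) = pr K 1 - pr K ((X:R)^j) := by simp [map_sub]
  rw [this, pr_X_pow h]; simp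

lemma isUnit_pr_one_sub_X_pow (K : ℕ) {j : ℕ} (hj : 1 ≤ j) :
    IsUnit (pr K (1 - (X : R) ^ j)) := by
  refine IsUnit.of_mul_eq_one (pr K (∑ i ∈ range K, (X : R) ^ (j * i))) ?_
  rw [← map_mul]
  have h2 : (1 - (X:R)^j) * (∑ i ∈ range K, (X : R) ^ (j * i)) = 1 - (X:R)^(j*K) := by
    have h1 := geom_sum_mul ((X:R)^j) K
    calc (1 - (X:R)^j) * (∑ i ∈ range K, (X : R) ^ (j * i))
        = -((∑ i ∈ range K, ((X:R)^j)^i) * ((X:R)^j - 1)) := by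
          simp only [← pow_mul]; ring
      _ = -((((X:R)^j)^K - 1)) := by rw [h1]
      _ = 1 - (X:R)^(j*K) := by rw [← pow_mul]; ring
  rw [h2, pr_one_sub_X_pow (Nat.le_mul_of_pos_left K hj)]


/-- `Cp r = ∏_{m=1}^r (1 - X^m)` -/
def Cp (r : ℕ) : R := ∏ m ∈ range r, (1 - (X:R) ^ (m+1))
/-- `Bp r = ∏_{m=1}^r (1 + X^m)` -/
def Bp (r : ℕ) : R := ∏ m ∈ range r, (1 + (X:R) ^ (m+1))

/-- Gaussian binomial coefficient as a power series. -/
def G : ℕ → ℕ → R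
  | _, 0 => 1
  | 0, _+1 => 0
  | M+1, k+1 => G M (k+1) + (X:R) ^ (M - k) * G M k

@[simp] lemma G_zero_right (M : ℕ) : G M 0 = 1 := by cases M <;> rfl

lemma G_succ_succ (M k : ℕ) : G (M+1) (k+1) = G M (k+1) + (X:R)^(M-k) * G M k := rfl

lemma G_eq_zero_of_lt : ∀ {M k : ℕ}, M < k → G M k = 0 := by
  intro M
  induction M with
  | zero => intro k hk; match k, hk with | k+1, _ => rfl
  | succ M ih =>
    intro k hk
    match k, hk with
    | k+1, hk =>
      rw [G_succ_succ, ih (by omega), ih (by omega)]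
      simp

@[simp] lemma G_self : ∀ M : ℕ, G M M = 1 := by
  intro M
  induction M with
  | zero => rfl
  | succ M ih => rw [G_succ_succ, ih, G_eq_zero_of_lt (by omega)]; simp

/-- `(1-X) * G M 1 = 1 - X^M` -/
lemma Gone : ∀ M : ℕ, (1 - (X:R)) * G M 1 = 1 - (X:R)^M := by
  intro M
  induction M with
  | zero => rw [show (1:ℕ) = 0 + 1 from rfl, G_eq_zero_of_lt (by omega)]; simp
  | succ M ih =>
    rw [G_succ_succ, mul_add, ih]
    simp only [Nat.sub_zero, G_zero_right, mul_one]
    ring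

/-- second Pascal rule -/
lemma G_pascal₂ : ∀ (M k : ℕ), G (M+1) (k+1) = (X:R)^(k+1) * G M (k+1) + G M k := by
  intro M
  induction M with
  | zero =>
    intro k
    cases k with
    | zero => simp [G_succ_succ, show (G 0 1 : R) = 0 from rfl]
    | succ k =>
      rw [G_succ_succ, G_eq_zero_of_lt (show 0 < k+1+1 by omega),
        G_eq_zero_of_lt (show 0 < k+1 by omega)]
      simp
  | succ M ih =>
    have absorb : ∀ k, (1 - (X:R)^(k+1)) * G M (k+1) = (1 - (X:R)^(M-k)) * G M k := by
      intro k
      have h1 := G_succ_succ M k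
      have h2 := ih k
      have h3 : G M (k+1) + (X:R)^(M-k) * G M k = (X:R)^(k+1) * G M (k+1) + G M k := by
        rw [← h1, ← h2]
      linear_combination h3
    intro k
    cases k with
    | zero =>
      rw [G_succ_succ]
      simp only [Nat.sub_zero, G_zero_right, mul_one]
      have h1 := Gone (M+1)
      linear_combination h1
    | succ k =>
      rw [G_succ_succ]
      by_cases hk : k + 1 ≤ M
      · obtain ⟨d, rfl⟩ : ∃ d, M = k+1+d := ⟨M-(k+1), by omega⟩
        have e1 : G (k+1+d+1) (k+1+1) = (X:R)^(k+1+1) * G (k+1+d) (k+1+1) + G (k+1+d) (k+1) :=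
          ih (k+1)
        have e3 : G (k+1+d+1) (k+1+1) = G (k+1+d) (k+1+1) + (X:R)^d * G (k+1+d) (k+1) := by
          have := G_succ_succ (k+1+d) (k+1)
          rwa [show k+1+d - (k+1) = d from by omega] at this
        have e4 : G (k+1+d+1) (k+1) = G (k+1+d) (k+1) + (X:R)^(d+1) * G (k+1+d) k := by
          have := G_succ_succ (k+1+d) k
          rwa [show k+1+d - k = d+1 from by omega] at this
        have habs : (1 - (X:R)^(k+1)) * G (k+1+d) (k+1)
            = (1 - (X:R)^(d+1)) * G (k+1+d) k := by
          have := absorb k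
          rwa [show k+1+d - k = d+1 from by omega] at this
        rw [show k+1+d+1 - (k+1) = d+1 from by omega]
        linear_combination e1 - (X:R)^(k+1+1) * e3 + ((X:R)^(d+1) - 1) * e4
          + (X:R)^(d+1) * habs
      · by_cases hMk : M = k
        · subst hMk
          rw [G_eq_zero_of_lt (show M+1 < M+1+1 by omega), G_self,
            show M+1 - (M+1) = 0 from by omega]
          simp
        · rw [G_eq_zero_of_lt (show M+1 < k+1+1 by omega),
            G_eq_zero_of_lt (show M+1 < k+1 by omega)]
          simp

/-- absorption identity -/
lemma G_absorb (M k : ℕ) : (1 - (X:R)^(k+1)) * G M (k+1) = (1 - (X:R)^(M-k)) * G M k := by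
  have h1 := G_succ_succ M k
  have h2 := G_pascal₂ M k
  have h3 : G M (k+1) + (X:R)^(M-k) * G M k = (X:R)^(k+1) * G M (k+1) + G M k := by
    rw [← h1, ← h2]
  linear_combination h3

/-- product formula: `G M k * (Cp k * Cp (M-k)) = Cp M` for `k ≤ M`. -/
lemma G_mul_Cp : ∀ (M k : ℕ), k ≤ M → G M k * (Cp k * Cp (M-k)) = Cp M := by
  intro M
  induction M with
  | zero => intro k hk; interval_cases k; simp [Cp]
  | succ M ih =>
    intro k hk
    cases k with
    | zero => simp [Cp]
    | succ k =>
      by_cases hkM : k + 1 ≤ M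
      · obtain ⟨d, rfl⟩ : ∃ d, M = k+1+d := ⟨M-(k+1), by omega⟩
        have hG : G (k+1+d+1) (k+1) = G (k+1+d) (k+1) + (X:R)^(d+1) * G (k+1+d) k := by
          have := G_succ_succ (k+1+d) k
          rwa [show k+1+d - k = d+1 from by omega] at this
        have i1 : G (k+1+d) (k+1) * (Cp (k+1) * Cp d) = Cp (k+1+d) := by
          have := ih (k+1) (by omega)
          rwa [show k+1+d - (k+1) = d from by omega] at this
        have i2 : G (k+1+d) k * (Cp k * Cp (d+1)) = Cp (k+1+d) := by
          have := ih k (by omega)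
          rwa [show k+1+d - k = d+1 from by omega] at this
        rw [show k+1+d+1 - (k+1) = d+1 from by omega, hG]
        have hCd : Cp (d+1) = Cp d * (1 - (X:R)^(d+1)) := by
          rw [Cp, Cp, prod_range_succ]
        have hCk : Cp (k+1) = Cp k * (1 - (X:R)^(k+1)) := by
          rw [Cp, Cp, prod_range_succ]
        have hCM : Cp (k+1+d+1) = Cp (k+1+d) * (1 - (X:R)^(k+1+d+1)) := by
          rw [Cp, Cp, prod_range_succ]
        rw [hCM]
        have hxp : (X:R)^(d+1) * (X:R)^(k+1) = (X:R)^(k+1+d+1) := by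
          rw [← pow_add]; all_goals (congr 1 <;> omega)
        linear_combination (G (k+1+d) (k+1) * Cp (k+1)) * hCd
          + (1 - (X:R)^(d+1)) * i1
          + ((X:R)^(d+1) * G (k+1+d) k * Cp (d+1)) * hCk
          + ((X:R)^(d+1) * (1 - (X:R)^(k+1))) * i2
      · -- k+1 = M+1
        have : k = M := by omega
        subst this
        rw [G_self]
        simp [Cp, show k+1 - (k+1) = 0 from by omega]

def tz (j : ℤ) : ℤ := j * (j+1) / 2

lemma tz_nonneg (j : ℤ) : 0 ≤ tz j := by
  unfold tz
  apply Int.ediv_nonneg _ (by norm_num)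
  rcases le_or_gt 0 j with h | h
  · positivity
  · nlinarith

lemma tz_step (j : ℤ) : tz (j+1) = tz j + (j+1) := by
  unfold tz
  have h : (j+1) * (j+1+1) = j * (j+1) + (j+1) * 2 := by ring
  rw [h, Int.add_mul_ediv_right _ _ (by norm_num : (2:ℤ) ≠ 0)]

def eps (N k : ℕ) : ℕ := (tz ((k:ℤ) - N)).toNat

def aC (N k : ℕ) : R := (X:R)^(eps N k) * G (2*N) k

lemma aC_eq_zero {N k : ℕ} (h : 2*N < k) : aC N k = 0 := by
  rw [aC, G_eq_zero_of_lt h, mul_zero]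

lemma key0 (N : ℕ) : aC (N+1) 0 = (X:R)^N * aC N 0 := by
  have e1 : (eps (N+1) 0 : ℤ) = tz (-((N:ℤ)+1)) := by
    unfold eps; rw [Int.toNat_of_nonneg (tz_nonneg _)]; all_goals (congr 1 <;> omega)
  have e2 : (eps N 0 : ℤ) = tz (-(N:ℤ)) := by
    unfold eps; rw [Int.toNat_of_nonneg (tz_nonneg _)]; all_goals (congr 1 <;> omega)
  have s1 : tz (-(N:ℤ)) = tz (-((N:ℤ)+1)) + (-(N:ℤ)) := by
    have := tz_step (-((N:ℤ)+1))
    rwa [show (-((N:ℤ)+1)+1) = -(N:ℤ) from by ring] at this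
  have n1 := tz_nonneg (-((N:ℤ)+1))
  have n2 := tz_nonneg (-(N:ℤ))
  have he : eps (N+1) 0 = N + eps N 0 := by omega
  unfold aC
  rw [he, show 2*(N+1) = 2*N+1+1 from by omega]
  rw [G_zero_right, G_zero_right, pow_add]
  try ring

lemma key1 (N : ℕ) : aC (N+1) 1 = (X:R)^N * aC N 1 + (1 + (X:R)^(2*N+1)) * aC N 0 := by
  have e1 : (eps N 0 : ℤ) = tz (-(N:ℤ)) := by
    unfold eps; rw [Int.toNat_of_nonneg (tz_nonneg _)]; all_goals (congr 1 <;> omega)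
  have e2 : (eps (N+1) 1 : ℤ) = tz (-(N:ℤ)) := by
    unfold eps; rw [Int.toNat_of_nonneg (tz_nonneg _)]; all_goals (congr 1 <;> omega)
  have e3 : (eps N 1 : ℤ) = tz (-(N:ℤ)+1) := by
    unfold eps; rw [Int.toNat_of_nonneg (tz_nonneg _)]; all_goals (congr 1 <;> omega)
  have s1 := tz_step (-(N:ℤ))
  have n1 := tz_nonneg (-(N:ℤ))
  have n2 := tz_nonneg (-(N:ℤ)+1)
  have hc1 : eps N 0 = eps (N+1) 1 := by omega
  have hc2 : N + eps N 1 = eps (N+1) 1 + 1 := by omega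
  have hG2 : G (2*(N+1)) 1 = G (2*N) 1 + (X:R)^(2*N) + (X:R)^(2*N+1) := by
    have a1 : G (2*N+1) 1 = G (2*N) 1 + (X:R)^(2*N) := by
      have := G_succ_succ (2*N) 0
      simpa using this
    have a2 : G (2*N+1+1) 1 = G (2*N+1) 1 + (X:R)^(2*N+1) := by
      have := G_succ_succ (2*N+1) 0
      simpa using this
    rw [show 2*(N+1) = 2*N+1+1 from by omega, a2, a1]
  unfold aC
  rw [hG2, G_zero_right, ← hc1]
  have hx : (X:R)^N * (X:R)^(eps N 1) = (X:R)^(eps N 0) * (X:R) := by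
    rw [← pow_add, ← pow_succ]
    congr 1
    omega
  have hgone := Gone (2*N)
  linear_combination (X:R)^(eps N 0) * hgone - G (2*N) 1 * hx


-- real key2
lemma key2' (N k : ℕ) : aC (N+1) (k+2) = (X:R)^N * aC N (k+2)
    + (1 + (X:R)^(2*N+1)) * aC N (k+1) + (X:R)^(N+1) * aC N k := by
  by_cases hk : k ≤ 2*N
  · set d := 2*N - k with hd
    have hdk : 2*N = k + d := by omega
    have e1 : (eps N (k+2) : ℤ) = tz ((k:ℤ)-N+1+1) := by
      unfold eps; rw [Int.toNat_of_nonneg (tz_nonneg _)]; all_goals (congr 1 <;> omega)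
    have e2 : (eps (N+1) (k+2) : ℤ) = tz ((k:ℤ)-N+1) := by
      unfold eps; rw [Int.toNat_of_nonneg (tz_nonneg _)]; all_goals (congr 1 <;> omega)
    have e3 : (eps N k : ℤ) = tz ((k:ℤ)-N) := by
      unfold eps; rw [Int.toNat_of_nonneg (tz_nonneg _)]; all_goals (congr 1 <;> omega)
    have s1 := tz_step ((k:ℤ)-N+1)
    have s2 := tz_step ((k:ℤ)-N)
    have n1 := tz_nonneg ((k:ℤ)-N+1+1)
    have n2 := tz_nonneg ((k:ℤ)-N+1)
    have n3 := tz_nonneg ((k:ℤ)-N)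
    have e4 : (eps N (k+1) : ℤ) = tz ((k:ℤ)-N+1) := by
      unfold eps; rw [Int.toNat_of_nonneg (tz_nonneg _)]; all_goals (congr 1 <;> omega)
    have hF2 : eps N (k+1) = eps (N+1) (k+2) := by omega
    have hF1 : N + eps N (k+2) = eps (N+1) (k+2) + (k+2) := by omega
    have hF3 : (N+1) + eps N k = eps (N+1) (k+2) + d := by omega
    have hA : G (2*N+1+1) (k+2) = G (2*N+1) (k+2) + (X:R)^d * G (2*N+1) (k+1) := by
      have := G_succ_succ (2*N+1) (k+1)
      rwa [show 2*N+1 - (k+1) = d from by omega] at this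
    have hB : G (2*N+1) (k+2) = (X:R)^(k+2) * G (2*N) (k+2) + G (2*N) (k+1) :=
      G_pascal₂ (2*N) (k+1)
    have hC : G (2*N+1) (k+1) = G (2*N) (k+1) + (X:R)^d * G (2*N) k := by
      have := G_succ_succ (2*N) k
      rwa [show 2*N - k = d from by omega] at this
    have habs : (1 - (X:R)^(k+1)) * G (2*N) (k+1) = (1 - (X:R)^d) * G (2*N) k := by
      have := G_absorb (2*N) k
      rwa [show 2*N - k = d from by omega] at this
    have hxx : (X:R)^(2*N+1) = (X:R)^d * (X:R)^(k+1) := by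
      rw [← pow_add]; all_goals (congr 1 <;> omega)
    unfold aC
    rw [show 2*(N+1) = 2*N+1+1 from by omega]
    rw [hA, hB, hC, ← hF2]
    have hp1 : (X:R)^N * (X:R)^(eps N (k+2)) = (X:R)^(eps N (k+1)) * (X:R)^(k+2) := by
      rw [← pow_add, ← pow_add]; congr 1
      omega
    have hp2 : (X:R)^(N+1) * (X:R)^(eps N k) = (X:R)^(eps N (k+1)) * (X:R)^d := by
      rw [← pow_add, ← pow_add]; congr 1
      omega
    linear_combination (X:R)^(eps N (k+1)) * (X:R)^d * habs
      - G (2*N) (k+2) * hp1 - G (2*N) k * hp2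
      - (X:R)^(eps N (k+1)) * G (2*N) (k+1) * hxx
  · rw [aC_eq_zero (show 2*(N+1) < k+2 by omega), aC_eq_zero (show 2*N < k+2 by omega),
      aC_eq_zero (show 2*N < k+1 by omega), aC_eq_zero (show 2*N < k by omega)]
    simp
-- appended to build
open Polynomial in
def SN (N : ℕ) : Polynomial R := ∑ k ∈ range (2*N+1), Polynomial.C (aC N k) * Polynomial.X ^ k

lemma coeff_SN (N d : ℕ) : (SN N).coeff d = aC N d := by
  rw [SN, Polynomial.finset_sum_coeff]
  simp only [Polynomial.coeff_C_mul, Polynomial.coeff_X_pow, mul_ite, mul_one, mul_zero]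
  rw [Finset.sum_ite_eq (range (2*N+1)) d (fun k => aC N k)]
  by_cases hd : d ∈ range (2*N+1)
  · simp [hd]
  · simp only [hd, if_false]
    rw [aC_eq_zero (by simp at hd; omega)]

open Polynomial in
def Wp (N : ℕ) : Polynomial R :=
  ∏ m ∈ range N, ((1 + Polynomial.C ((X:R)^(m+1)) * Polynomial.X)
    * (Polynomial.X + Polynomial.C ((X:R)^m)))

lemma claimW : ∀ N, Wp N = SN N := by
  intro N
  induction N with
  | zero =>
    rw [Wp, SN]
    simp only [range_zero, prod_empty, mul_zero, zero_add, range_one, sum_singleton, pow_zero,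
      mul_one]
    have : aC 0 0 = 1 := by
      rw [aC, G_zero_right, mul_one, eps, show ((0:ℕ):ℤ) - ((0:ℕ):ℤ) = 0 from by omega]
      norm_num [tz]
    rw [this, map_one]
  | succ N ih =>
    have hquad : (1 + Polynomial.C ((X:R)^(N+1)) * Polynomial.X)
        * (Polynomial.X + Polynomial.C ((X:R)^N))
        = Polynomial.C ((X:R)^N) + Polynomial.C (1 + (X:R)^(2*N+1)) * Polynomial.X
          + Polynomial.C ((X:R)^(N+1)) * Polynomial.X^2 := by
      rw [map_add, map_one, map_pow]
      have : ((X:R)^(2*N+1)) = (X:R)^(N+1) * (X:R)^N := by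
        rw [← pow_add]; congr 1; omega
      rw [this, map_mul, map_pow, map_pow]
      ring
    rw [Wp, prod_range_succ, ← Wp, ih, hquad]
    apply Polynomial.ext
    intro d
    rw [coeff_SN]
    rw [mul_add, mul_add, Polynomial.coeff_add, Polynomial.coeff_add]
    have t0 : (SN N * Polynomial.C ((X:R)^N)).coeff d = aC N d * (X:R)^N := by
      rw [Polynomial.coeff_mul_C, coeff_SN]
    have t1 : (SN N * (Polynomial.C (1 + (X:R)^(2*N+1)) * Polynomial.X)).coeff d
        = if d = 0 then 0 else aC N (d-1) * (1 + (X:R)^(2*N+1)) := by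
      rw [show SN N * (Polynomial.C (1 + (X:R)^(2*N+1)) * Polynomial.X)
        = (SN N * Polynomial.C (1 + (X:R)^(2*N+1))) * Polynomial.X from by ring]
      cases d with
      | zero => simp
      | succ e =>
        rw [Polynomial.coeff_mul_X, Polynomial.coeff_mul_C, coeff_SN]
        simp
    have t2 : (SN N * (Polynomial.C ((X:R)^(N+1)) * Polynomial.X^2)).coeff d
        = if d ≤ 1 then 0 else aC N (d-2) * (X:R)^(N+1) := by
      rw [show SN N * (Polynomial.C ((X:R)^(N+1)) * Polynomial.X^2)
        = ((SN N * Polynomial.C ((X:R)^(N+1))) * Polynomial.X) * Polynomial.X from by ring]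
      match d with
      | 0 => simp
      | 1 =>
        rw [Polynomial.coeff_mul_X]
        simp
      | (e+2) =>
        rw [Polynomial.coeff_mul_X, Polynomial.coeff_mul_X, Polynomial.coeff_mul_C, coeff_SN]
        simp
    rw [t0, t1, t2]
    match d with
    | 0 =>
      rw [if_pos rfl, if_pos (by norm_num : (0:ℕ) ≤ 1), add_zero, add_zero, key0]; ring
    | 1 =>
      rw [if_neg (by omega : ¬(1:ℕ) = 0), if_pos (le_refl 1), add_zero,
        show (1:ℕ)-1 = 0 from rfl, key1]; ring
    | (e+2) =>
      rw [if_neg (by omega : ¬(e+2 = 0)), if_neg (by omega : ¬(e+2 ≤ 1)),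
        show e+2-1 = e+1 from by omega, show e+2-2 = e from by omega, key2']; ring

lemma evalW (N : ℕ) : ∏ m ∈ range N, ((1 + (X:R)^(m+1)) * (1 + (X:R)^m))
    = ∑ k ∈ range (2*N+1), aC N k := by
  have h := congrArg (Polynomial.eval 1) (claimW N)
  rw [Wp, SN] at h
  rw [Polynomial.eval_prod] at h
  simp only [Polynomial.eval_finset_sum, Polynomial.eval_mul, Polynomial.eval_add,
    Polynomial.eval_one, Polynomial.eval_C, Polynomial.eval_X, Polynomial.eval_pow, one_pow,
    mul_one] at h
  exact h

attribute [local instance] Classical.propDecidable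

/-! ### the triangular-number sum -/

def T (n : ℕ) : ℕ := n*(n+1)/2

lemma T_succ (n : ℕ) : T (n+1) = T n + (n+1) := by
  unfold T
  have h : (n+1)*(n+1+1) = n*(n+1) + (n+1)*2 := by ring
  rw [h, Nat.add_mul_div_right _ _ (by norm_num : 0 < 2)]

lemma T_strictMono : StrictMono T :=
  strictMono_nat_of_lt_succ (fun n => by rw [T_succ]; omega)

lemma le_T (n : ℕ) : n ≤ T n := by
  induction n with
  | zero => simp [T]
  | succ n ih => rw [T_succ]; omega

lemma T_tz (m : ℕ) : (T m : ℤ) = tz (m : ℤ) := by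
  have h1 : T m * 2 = m*(m+1) := Nat.div_mul_cancel (Nat.even_mul_succ_self m).two_dvd
  have h2 : tz (m:ℤ) * 2 = (m:ℤ)*((m:ℤ)+1) := by
    unfold tz
    exact Int.ediv_mul_cancel (Int.even_mul_succ_self (m:ℤ)).two_dvd
  have h1' : (T m : ℤ) * 2 = (m:ℤ)*((m:ℤ)+1) := by exact_mod_cast congrArg (Nat.cast : ℕ → ℤ) h1
  omega

lemma tz_neg (j : ℤ) : tz (-j-1) = tz j := by
  unfold tz
  have : (-j-1) * (-j-1+1) = j * (j+1) := by ring
  rw [this]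

lemma tz_ge_self {j : ℤ} (h : 0 ≤ j) : j ≤ tz j := by
  unfold tz
  rw [Int.le_ediv_iff_mul_le (by norm_num : (0:ℤ) < 2)]
  rcases eq_or_lt_of_le h with h' | h'
  · rw [← h']; norm_num
  · nlinarith

lemma coeff_sum_T {s : Finset ℕ} {d : ℕ} (hs : ∀ n, T n = d → n ∈ s) :
    coeff (R := ℤ) d (∑ n ∈ s, (X:R)^(T n)) = (if ∃ n, T n = d then 1 else 0) := by
  rw [map_sum]
  simp only [coeff_X_pow]
  by_cases h : ∃ n, T n = d
  · obtain ⟨n₀, hn₀⟩ := h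
    rw [if_pos ⟨n₀, hn₀⟩]
    rw [Finset.sum_eq_single n₀]
    · rw [if_pos hn₀.symm]
    · intro n _ hn
      rw [if_neg]
      intro hc
      exact hn (T_strictMono.injective (hn₀ ▸ hc.symm))
    · intro hc; exact absurd (hs n₀ hn₀) hc
  · rw [if_neg h]
    apply Finset.sum_eq_zero
    intro n _
    rw [if_neg]
    intro hc
    exact h ⟨n, hc.symm⟩

def Sv : R := PowerSeries.mk fun d => if ∃ n, T n = d then 1 else 0

lemma hasSum_S : HasSum (fun n : ℕ => (X:R)^(n*(n+1)/2)) Sv := by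
  apply hasSum_of_coeff
  intro d
  refine ⟨range (d+1), fun s hs => ?_⟩
  have : ∀ n, T n = d → n ∈ s := by
    intro n hn
    exact hs (Finset.mem_range.2 (by have := le_T n; omega))
  calc coeff (R := ℤ) d (∑ n ∈ s, (X:R)^(n*(n+1)/2)) = coeff (R := ℤ) d (∑ n ∈ s, (X:R)^(T n)) := rfl
    _ = (if ∃ n, T n = d then 1 else 0) := coeff_sum_T this
    _ = coeff (R := ℤ) d Sv := by rw [Sv, coeff_mk]

lemma coeff_sum_range_T {N d : ℕ} (h : d < N) :
    coeff (R := ℤ) d (∑ n ∈ range N, (X:R)^(T n)) = coeff (R := ℤ) d Sv := by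
  rw [coeff_sum_T (fun n hn => Finset.mem_range.2 (by have := le_T n; omega)), Sv, coeff_mk]

/-! ### the infinite product -/

def g (m : ℕ) : R := (1 - (X:R)^(2*m))^2 * Ring.inverse (1 - (X:R)^m)

lemma isUnit_one_sub_X_pow {m : ℕ} (hm : 1 ≤ m) : IsUnit (1 - (X:R)^m) := by
  rw [PowerSeries.isUnit_iff_constantCoeff]
  simp [zero_pow (by omega : m ≠ 0)]

lemma g_mul {m : ℕ} (hm : 1 ≤ m) : g m * (1 - (X:R)^m) = (1 - (X:R)^(2*m))^2 := by
  rw [g, mul_assoc, Ring.inverse_mul_cancel _ (isUnit_one_sub_X_pow hm), mul_one]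

lemma pr_g {K m : ℕ} (hm : K ≤ m) (h1 : 1 ≤ m) : pr K (g m) = 1 := by
  have h := congrArg (pr K) (g_mul h1)
  rw [map_mul, pr_one_sub_X_pow hm, mul_one, map_pow,
    pr_one_sub_X_pow (le_trans hm (by omega)), one_pow] at h
  exact h

def Fp (r : ℕ) : R := ∏ m ∈ range r, g (m+1)

lemma pr_Fp_stable {K r r' : ℕ} (h : K ≤ r) (h' : r ≤ r') : pr K (Fp r') = pr K (Fp r) := by
  unfold Fp
  rw [range_eq_Ico, ← Finset.prod_Ico_consecutive _ (Nat.zero_le r) h', map_mul]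
  have h2 : pr K (∏ i ∈ Ico r r', g (i+1)) = 1 := by
    rw [map_prod]
    exact Finset.prod_eq_one
      (fun m hm => pr_g (by have := (Finset.mem_Ico.1 hm).1; omega) (by omega))
  rw [h2, mul_one, range_eq_Ico]

def Pv : R := PowerSeries.mk fun d => coeff (R := ℤ) d (Fp (d+1))

lemma coeff_Pv {d r : ℕ} (h : d < r) : coeff (R := ℤ) d Pv = coeff (R := ℤ) d (Fp r) := by
  rw [Pv, coeff_mk]
  exact (coeff_eq_of_pr_eq (pr_Fp_stable (le_refl (d+1)) h) (by omega)).symm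

lemma hasProd_g : HasProd (fun m : ℕ+ => g (m : ℕ)) Pv := by
  apply hasProd_of_coeff
  intro d
  refine ⟨Finset.image (fun i : ℕ => (⟨i+1, Nat.succ_pos i⟩ : ℕ+)) (range (d+1)),
    fun s hs => ?_⟩
  set s₀ : Finset ℕ+ := Finset.image (fun i : ℕ => (⟨i+1, Nat.succ_pos i⟩ : ℕ+)) (range (d+1))
  have h1 : ∏ m ∈ s₀, g (m:ℕ) = Fp (d+1) := by
    refine (Finset.prod_image (f := fun m : ℕ+ => g (m:ℕ)) (by
      intro a _ b _ hab
      have h2 : a + 1 = b + 1 := congrArg (fun x : ℕ+ => (x:ℕ)) hab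
      omega)).trans ?_
    rfl
  have hsplit : ∏ m ∈ s, g (m:ℕ) = (∏ m ∈ s \ s₀, g (m:ℕ)) * ∏ m ∈ s₀, g (m:ℕ) :=
    (Finset.prod_sdiff hs).symm
  have h2 : pr (d+1) (∏ m ∈ s \ s₀, g (m:ℕ)) = 1 := by
    rw [map_prod]
    apply Finset.prod_eq_one
    intro m hm
    obtain ⟨hms, hmn⟩ := Finset.mem_sdiff.1 hm
    have hm1 : 1 ≤ (m:ℕ) := m.2
    have hge : d+1 ≤ (m:ℕ) := by
      rcases Nat.lt_or_ge ((m:ℕ)) (d+1) with hlt | hge'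
      · exfalso
        apply hmn
        refine Finset.mem_image.2 ⟨(m:ℕ)-1, Finset.mem_range.2 (by omega), ?_⟩
        apply Subtype.ext
        show ((m:ℕ)-1)+1 = (m:ℕ)
        omega
      · exact hge'
    exact pr_g hge (by have := m.2; omega)
  have : pr (d+1) (∏ m ∈ s, g (m:ℕ)) = pr (d+1) (Fp (d+1)) := by
    rw [hsplit, map_mul, h2, one_mul, h1]
  rw [coeff_eq_of_pr_eq this (by omega), Pv, coeff_mk]

/-! ### assembling the identity -/

lemma pr_one_add_X_pow {K j : ℕ} (h : K ≤ j) : pr K (1 + (X:R) ^ j) = 1 := by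
  have : pr K (1 + (X:R)^j) = pr K 1 + pr K ((X:R)^j) := by simp [map_add]
  rw [this, pr_X_pow h]; simp

lemma prBp_stable {K r : ℕ} (h : K ≤ r) : pr K (Bp r) = pr K (Bp K) := by
  unfold Bp
  rw [range_eq_Ico, ← Finset.prod_Ico_consecutive _ (Nat.zero_le K) h, map_mul]
  have h2 : pr K (∏ i ∈ Ico K r, (1 + (X:R)^(i+1))) = 1 := by
    rw [map_prod]
    exact Finset.prod_eq_one
      (fun m hm => pr_one_add_X_pow (by have := (Finset.mem_Ico.1 hm).1; omega))
  rw [h2, mul_one, range_eq_Ico]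

lemma prCp_stable {K r : ℕ} (h : K ≤ r) : pr K (Cp r) = pr K (Cp K) := by
  unfold Cp
  rw [range_eq_Ico, ← Finset.prod_Ico_consecutive _ (Nat.zero_le K) h, map_mul]
  have h2 : pr K (∏ i ∈ Ico K r, (1 - (X:R)^(i+1))) = 1 := by
    rw [map_prod]
    exact Finset.prod_eq_one
      (fun m hm => pr_one_sub_X_pow (by have := (Finset.mem_Ico.1 hm).1; omega))
  rw [h2, mul_one, range_eq_Ico]

lemma isUnit_pr_Cp {K r : ℕ} : IsUnit (pr K (Cp r)) := by
  rw [Cp, map_prod]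
  refine Finset.prod_induction _ IsUnit (fun a b ha hb => ha.mul hb) isUnit_one ?_
  intro m _
  exact isUnit_pr_one_sub_X_pow K (by omega)

lemma central_G {K N k : ℕ} (hk : K ≤ k) (hk2 : k ≤ 2*N) (hk3 : K ≤ 2*N - k) (hN : K ≤ N) :
    pr K (G (2*N) k) = pr K (G (2*N) N) := by
  have h1 := congrArg (pr K) (G_mul_Cp (2*N) k hk2)
  have h2 := congrArg (pr K) (G_mul_Cp (2*N) N (by omega))
  rw [show 2*N - N = N from by omega] at h2
  rw [map_mul, map_mul, prCp_stable hk, prCp_stable hk3] at h1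
  rw [map_mul, map_mul, prCp_stable hN] at h2
  have h3 : pr K (Cp K) * pr K (Cp K) * pr K (G (2*N) k)
      = pr K (Cp K) * pr K (Cp K) * pr K (G (2*N) N) := by
    linear_combination h1 - h2
  exact (isUnit_pr_Cp.mul isUnit_pr_Cp).mul_left_cancel h3

lemma eps_big {K N k : ℕ} (hN : N = 2*K+2) (h : k < K ∨ 2*N - K < k) : K ≤ eps N k := by
  have e : (eps N k : ℤ) = tz ((k:ℤ)-N) := by
    unfold eps; rw [Int.toNat_of_nonneg (tz_nonneg _)]
  rcases h with h | h
  · have hneg := tz_neg ((N:ℤ)-k-1)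
    rw [show -((N:ℤ)-k-1)-1 = (k:ℤ)-N from by ring] at hneg
    have hge := tz_ge_self (show (0:ℤ) ≤ (N:ℤ)-k-1 by omega)
    omega
  · have hge := tz_ge_self (show (0:ℤ) ≤ (k:ℤ)-N by omega)
    have := tz_nonneg ((k:ℤ)-N)
    omega

lemma eps_reflect {N k : ℕ} (h : k < N) : eps N k = T (N-1-k) := by
  have e : (eps N k : ℤ) = tz ((k:ℤ)-N) := by
    unfold eps; rw [Int.toNat_of_nonneg (tz_nonneg _)]
  have hneg := tz_neg ((N:ℤ)-k-1)
  rw [show -((N:ℤ)-k-1)-1 = (k:ℤ)-N from by ring] at hneg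
  have ht := T_tz (N-1-k)
  have hc : ((N-1-k : ℕ) : ℤ) = (N:ℤ)-k-1 := by omega
  rw [hc] at ht
  omega

lemma eps_shift (N k : ℕ) : eps N (N+k) = T k := by
  have e : (eps N (N+k) : ℤ) = tz ((k:ℤ)) := by
    unfold eps; rw [Int.toNat_of_nonneg (tz_nonneg _)]
    all_goals (congr 1 <;> omega)
  have ht := T_tz k
  omega

lemma sum_eps {K N : ℕ} (hN : N = 2*K+2) :
    ∑ k ∈ range (2*N+1), pr K ((X:R)^(eps N k)) = 2 * ∑ n ∈ range N, pr K ((X:R)^(T n)) := by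
  rw [show 2*N+1 = N + (N+1) from by omega,
    Finset.sum_range_add (fun k => pr K ((X:R)^(eps N k))) N (N+1)]
  have hA : ∑ k ∈ range N, pr K ((X:R)^(eps N k)) = ∑ n ∈ range N, pr K ((X:R)^(T n)) := by
    rw [Finset.sum_congr rfl (fun k hk => by
      rw [eps_reflect (Finset.mem_range.1 hk)])]
    exact Finset.sum_range_reflect (fun n => pr K ((X:R)^(T n))) N
  have hB : ∑ k ∈ range (N+1), pr K ((X:R)^(eps N (N+k)))
      = ∑ n ∈ range N, pr K ((X:R)^(T n)) := by
    rw [Finset.sum_range_succ]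
    rw [Finset.sum_congr rfl (fun k _ => by rw [eps_shift])]
    rw [eps_shift, pr_X_pow (le_trans (by omega) (le_T N)), add_zero]
  rw [hA, hB]
  ring

lemma coeff_Sv_Pv (d : ℕ) : coeff (R := ℤ) d Sv = coeff (R := ℤ) d Pv := by
  set K := d + 3 with hK
  set N := 2*K + 2 with hN
  -- step 1: the evaluated polynomial identity
  have h0 := evalW N
  have hsplitL : (∏ m ∈ range N, ((1 + (X:R)^(m+1)) * (1 + (X:R)^m)))
      = Bp N * (Bp (2*K+1) * 2) := by
    rw [prod_mul_distrib]
    congr 1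
    rw [show N = (2*K+1)+1 from by omega,
      Finset.prod_range_succ' (fun m => 1 + (X:R)^m) (2*K+1)]
    norm_num [Bp]
  -- step 2: image of the sum side
  have hsum : pr K (∑ k ∈ range (2*N+1), aC N k)
      = (2 * ∑ n ∈ range N, pr K ((X:R)^(T n))) * pr K (G (2*N) N) := by
    rw [map_sum]
    have hper : ∀ k ∈ range (2*N+1),
        pr K (aC N k) = pr K ((X:R)^(eps N k)) * pr K (G (2*N) N) := by
      intro k hk
      have hk' : k ≤ 2*N := by have := Finset.mem_range.1 hk; omega
      by_cases hc : K ≤ k ∧ K ≤ 2*N - k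
      · rw [aC, map_mul, central_G hc.1 hk' hc.2 (by omega)]
      · have hbig : K ≤ eps N k := eps_big hN (by omega)
        rw [aC, map_mul, pr_X_pow hbig, zero_mul, zero_mul]
    rw [Finset.sum_congr rfl hper, ← Finset.sum_mul, sum_eps hN]
  -- step 3: unit relations
  have hcu : IsUnit (pr K (Cp K)) := isUnit_pr_Cp
  have hu : pr K (G (2*N) N) * (pr K (Cp K) * pr K (Cp K)) = pr K (Cp K) := by
    have h := congrArg (pr K) (G_mul_Cp (2*N) N (by omega))
    rw [show 2*N - N = N from by omega, map_mul, map_mul,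
      prCp_stable (show K ≤ N by omega), prCp_stable (show K ≤ 2*N by omega)] at h
    exact h
  have huc : pr K (G (2*N) N) * pr K (Cp K) = 1 := by
    apply hcu.mul_left_cancel
    linear_combination hu
  -- step 4: the product side
  have hFp : Fp K * Cp K = Cp K^2 * Bp K^2 := by
    calc Fp K * Cp K = ∏ m ∈ range K, (g (m+1) * (1 - (X:R)^(m+1))) := by
          rw [Fp, Cp, prod_mul_distrib]
      _ = ∏ m ∈ range K, ((1 - (X:R)^(m+1))^2 * (1 + (X:R)^(m+1))^2) :=
          Finset.prod_congr rfl (fun m _ => by rw [g_mul (by omega)]; ring)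
      _ = Cp K^2 * Bp K^2 := by
          rw [prod_mul_distrib, prod_pow, prod_pow, Cp, Bp]
  have hF : pr K (Fp K) = pr K (Bp K)^2 * pr K (Cp K) := by
    apply hcu.mul_left_cancel
    have h := congrArg (pr K) hFp
    rw [map_mul, map_mul, map_pow, map_pow] at h
    linear_combination h
  -- step 5: combine
  have e1 : pr K (Bp K) * (pr K (Bp K) * 2)
      = (2 * ∑ n ∈ range N, pr K ((X:R)^(T n))) * pr K (G (2*N) N) := by
    have h := congrArg (pr K) (hsplitL.symm.trans h0)
    rw [map_mul, map_mul, prBp_stable (show K ≤ N by omega),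
      prBp_stable (show K ≤ 2*K+1 by omega), map_ofNat, hsum] at h
    exact h
  have hS : ∑ n ∈ range N, pr K ((X:R)^(T n)) = pr K (∑ n ∈ range N, (X:R)^(T n)) := by
    rw [map_sum]
  have final : pr K (Fp K + Fp K)
      = pr K ((∑ n ∈ range N, (X:R)^(T n)) + (∑ n ∈ range N, (X:R)^(T n))) := by
    rw [map_add, map_add, hF]
    rw [hS] at e1
    linear_combination pr K (Cp K) * e1
      + 2 * pr K (∑ n ∈ range N, (X:R)^(T n)) * huc
  -- step 6: extract coefficient d
  have hco := coeff_eq_of_pr_eq final (show d < K by omega)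
  rw [map_add, map_add] at hco
  have h1 : coeff (R := ℤ) d (Fp K) = coeff (R := ℤ) d (∑ n ∈ range N, (X:R)^(T n)) := by omega
  rw [coeff_Pv (show d < K by omega), h1, coeff_sum_range_T (show d < N by omega)]

end JTP

/-- The Jacobi triple product special case: in `ℤ[[q]]`,
`Σ_{n≥0} q^{n(n+1)/2} = ∏_{m≥1} (1−q^{2m})²/(1−q^m)`.  The inverse of `1−q^m` is taken
via `Ring.inverse` (it is a unit of `ℤ[[q]]`). -/
theorem triangular_theta_eq_eta_quotient :
    (∑' n : ℕ, (X : PowerSeries ℤ) ^ (n * (n + 1) / 2))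
      = ∏' m : ℕ+, ((1 - (X : PowerSeries ℤ) ^ (2 * m : ℕ))^2
          * Ring.inverse (1 - (X : PowerSeries ℤ) ^ (m : ℕ))) := by
  have h1 : (∑' n : ℕ, (X : PowerSeries ℤ) ^ (n * (n + 1) / 2)) = JTP.Sv :=
    JTP.hasSum_S.tsum_eq
  have h2 : (∏' m : ℕ+, ((1 - (X : PowerSeries ℤ) ^ (2 * m : ℕ))^2
      * Ring.inverse (1 - (X : PowerSeries ℤ) ^ (m : ℕ)))) = JTP.Pv :=
    JTP.hasProd_g.tprod_eq
  rw [h1, h2]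
  exact PowerSeries.ext JTP.coeff_Sv_Pv
end
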